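/- Let 1 ≤ p, q < ∞, let ω be a weight on the upper half-plane 𝓗, and let μ be a positive Borel measure on 𝓗. Then the following are equivalent: (i) there exists a constant C₁ > 0 such that for every bounded interval I ⊂ ℝ, |Q_I|^{−q/p} (|Q_I|^{−1} ∫_{Q_I} ω^{1−p'} dV)^{q/p'} μ(Q_I) ≤ C₁, where for p = 1 the quantity (|Q_I|^{−1} ∫_{Q_I} ω^{1−p'} dV)^{1/p'} is interpreted as (ess inf_{Q_I} ω)^{−1}; (ii) there exists a constant C₂ > 0 such that for every locally integrable function f on 𝓗 and every bounded interval I ⊂ ℝ, (|Q_I|^{−1} ∫_{Q_I} |f| dV)^q μ(Q_I) ≤ C₂ (∫_{Q_I} |f|^p ω dV)^{q/p}. -/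

import Mathlib

open MeasureTheory Set
open scoped ENNReal NNReal Classical

noncomputable section
open scoped Topology

/-- The upper half-plane `𝓗`. -/
def UHP : Set ℂ := {z : ℂ | 0 < z.im}

/-- The Carleson box `Q_I` over the bounded interval `I = [a, b)`. -/
def Box (a b : ℝ) : Set ℂ := {z : ℂ | z.re ∈ Set.Ico a b ∧ z.im ∈ Set.Ioo 0 (b - a)}

/-- The quantity `(|Q_I|^{-1} ∫_{Q_I} ω^{1-p'} dV)^{1/p'}`, interpreted as
`(ess inf_{Q_I} ω)⁻¹` when `p = 1` (here `p' = p/(p-1)` and `1/p' = (p-1)/p`). -/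
def dualFactor (ω : ℂ → ℝ≥0∞) (p a b : ℝ) : ℝ≥0∞ :=
  if p = 1 then (essInf ω (volume.restrict (Box a b)))⁻¹
  else ((volume (Box a b))⁻¹ * ∫⁻ z in Box a b, ω z ^ (1 - p / (p - 1))) ^ ((p - 1) / p)

lemma box_eq (a b : ℝ) :
    Box a b = Complex.measurableEquivRealProd ⁻¹' (Set.Ico a b ×ˢ Set.Ioo 0 (b - a)) := by
  ext z; simp [Box, Complex.measurableEquivRealProd_apply, Set.mem_prod]

lemma measurableSet_box (a b : ℝ) : MeasurableSet (Box a b) := by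
  rw [box_eq]
  exact (measurableSet_Ico.prod measurableSet_Ioo).preimage (MeasurableEquiv.measurable _)

lemma volume_box (a b : ℝ) :
    volume (Box a b) = ENNReal.ofReal (b - a) * ENNReal.ofReal (b - a) := by
  rw [box_eq, Complex.volume_preserving_equiv_real_prod.measure_preimage_equiv,
    Measure.volume_eq_prod, Measure.prod_prod, Real.volume_Ico, Real.volume_Ioo, sub_zero]

lemma volume_box_pos {a b : ℝ} (h : a < b) : volume (Box a b) ≠ 0 := by
  rw [volume_box]
  simp [ENNReal.ofReal_eq_zero, not_le, sub_pos, h]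

lemma volume_box_ne_top (a b : ℝ) : volume (Box a b) ≠ ⊤ := by
  rw [volume_box]; exact ENNReal.mul_ne_top ENNReal.ofReal_ne_top ENNReal.ofReal_ne_top

lemma ennreal_rpow_iSup (f : ℕ → ℝ≥0∞) {c : ℝ} (hc : 0 < c) :
    (⨆ n, f n) ^ c = ⨆ n, f n ^ c := by
  apply le_antisymm
  · have h1 : ⨆ n, f n ≤ (⨆ n, f n ^ c) ^ (1 / c) := by
      refine iSup_le fun n => ?_
      have h2 : f n = (f n ^ c) ^ (1 / c) := by
        rw [← ENNReal.rpow_mul, mul_one_div, div_self hc.ne', ENNReal.rpow_one]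
      rw [h2]
      exact ENNReal.rpow_le_rpow (le_iSup (fun n => f n ^ c) n) (by positivity)
    calc (⨆ n, f n) ^ c ≤ ((⨆ n, f n ^ c) ^ (1 / c)) ^ c :=
          ENNReal.rpow_le_rpow h1 hc.le
      _ = ⨆ n, f n ^ c := by
          rw [← ENNReal.rpow_mul, one_div_mul_cancel hc.ne', ENNReal.rpow_one]
  · exact iSup_le fun n => ENNReal.rpow_le_rpow (le_iSup f n) hc.le

lemma ennreal_iSup_min_nat (x : ℝ≥0∞) : ⨆ n : ℕ, min x (n : ℝ≥0∞) = x := by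
  refine le_antisymm (iSup_le fun n => min_le_left _ _) ?_
  rcases eq_or_ne x ⊤ with h | h
  · subst h
    calc (⊤ : ℝ≥0∞) = ⨆ n : ℕ, (n : ℝ≥0∞) := ENNReal.iSup_natCast.symm
      _ ≤ ⨆ n : ℕ, min ⊤ (n : ℝ≥0∞) := by simp
  · obtain ⟨n, hn⟩ := ENNReal.exists_nat_gt h
    refine le_trans ?_ (le_iSup (fun n : ℕ => min x (n : ℝ≥0∞)) n)
    rw [min_eq_left hn.le]

lemma ennreal_inv_mul_le_one (x : ℝ≥0∞) : x⁻¹ * x ≤ 1 := ENNReal.inv_mul_le_one x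

/-- Normal form for the LHS of the testing condition when `p > 1`. -/
lemma lhs_normal {p : ℝ} {q : ℝ} (hq0 : 0 ≤ q) (hp1 : 1 < p) (ω : ℂ → ℝ≥0∞) (μ : Measure ℂ)
    {a b : ℝ} (hab : a < b) :
    volume (Box a b) ^ (-(q / p)) * dualFactor ω p a b ^ q * μ (Box a b)
      = ((volume (Box a b))⁻¹) ^ q
          * (∫⁻ z in Box a b, ω z ^ (1 - p / (p - 1))) ^ ((p - 1) / p * q)
          * μ (Box a b) := by
  have hp0 : (0:ℝ) < p := lt_trans one_pos hp1
  have hV0 : volume (Box a b) ≠ 0 := volume_box_pos hab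
  have hVt : volume (Box a b) ≠ ⊤ := volume_box_ne_top a b
  have hs : (0:ℝ) ≤ (p - 1) / p * q :=
    mul_nonneg (div_nonneg (by linarith) (by linarith)) hq0
  rw [dualFactor, if_neg hp1.ne']
  congr 1
  rw [← ENNReal.rpow_mul,
    ENNReal.mul_rpow_of_nonneg _ _ hs,
    ENNReal.rpow_neg, ← ENNReal.inv_rpow, ← mul_assoc,
    ← ENNReal.rpow_add _ _ (ENNReal.inv_ne_zero.2 hVt) (ENNReal.inv_ne_top.2 hV0)]
  congr 2
  field_simp
  ring

/-- Lemma: for `1 ≤ p, q < ∞`, a weight `ω` and a positive Borel measure `μ` on `𝓗`,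
the testing condition (i) on Carleson boxes is equivalent to the integral testing
condition (ii) over locally integrable functions. -/
theorem box_testing_iff_integral_testing (p q : ℝ) (hp : 1 ≤ p) (hq : 1 ≤ q)
    (ω : ℂ → ℝ≥0∞) (hω : Measurable ω) (μ : Measure ℂ) :
    (∃ C : ℝ≥0∞, 0 < C ∧ C < ⊤ ∧ ∀ a b : ℝ, a < b →
        volume (Box a b) ^ (-(q / p)) * dualFactor ω p a b ^ q * μ (Box a b) ≤ C) ↔
      (∃ C : ℝ≥0∞, 0 < C ∧ C < ⊤ ∧ ∀ f : ℂ → ℂ, Measurable f → ∀ a b : ℝ, a < b →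
        ((volume (Box a b))⁻¹ * ∫⁻ w in Box a b, (‖f w‖₊ : ℝ≥0∞)) ^ q * μ (Box a b) ≤
          C * (∫⁻ w in Box a b, (‖f w‖₊ : ℝ≥0∞) ^ p * ω w) ^ (q / p)) := by
  have hq0 : (0:ℝ) < q := lt_of_lt_of_le one_pos hq
  have hp0 : (0:ℝ) < p := lt_of_lt_of_le one_pos hp
  constructor
  · -- (i) → (ii)
    rintro ⟨C, hC0, hCt, hC⟩
    refine ⟨C, hC0, hCt, ?_⟩
    intro f hf a b hab
    set Q := Box a b with hQ
    set V := volume Q with hV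
    have hV0 : V ≠ 0 := volume_box_pos hab
    have hVt : V ≠ ⊤ := volume_box_ne_top a b
    set F : ℂ → ℝ≥0∞ := fun w => (‖f w‖₊ : ℝ≥0∞) with hF
    have hFmeas : Measurable F := hf.enorm
    set B := ∫⁻ w in Q, F w ^ p * ω w with hB
    by_cases hBtop : B = ⊤
    · rw [hBtop, ENNReal.top_rpow_of_pos (by positivity), ENNReal.mul_top hC0.ne']
      exact le_top
    rcases hp.eq_or_lt with hp1 | hp1
    · -- p = 1
      subst hp1
      simp only [ENNReal.rpow_one] at hB ⊢
      set m := essInf ω (volume.restrict Q) with hm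
      have hCab := hC a b hab
      rw [dualFactor, if_pos rfl, ← hQ, ← hV, ← hm] at hCab
      by_cases hm0 : m = 0
      · -- essInf is 0, so μ Q = 0
        have hμ0 : μ Q = 0 := by
          by_contra hμ
          have hX : V ^ (-(q / 1)) ≠ 0 := by
            simp [ENNReal.rpow_eq_zero_iff, hV0, hVt]
          have : V ^ (-(q / 1)) * (m⁻¹) ^ q * μ Q = ⊤ := by
            rw [hm0, ENNReal.inv_zero, ENNReal.top_rpow_of_pos hq0,
              ENNReal.mul_top hX, ENNReal.top_mul hμ]
          exact absurd (this ▸ hCab) (by simp [hCt.ne])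
        rw [hμ0, mul_zero]
        exact zero_le
      · -- essInf m ≠ 0
        have hae1 : ∀ᵐ z ∂(volume.restrict Q), m ≤ ω z := ae_essInf_le
        have hBtop' : (∫⁻ w in Q, F w * ω w) ≠ ⊤ := by rw [← hB]; exact hBtop
        have hae2 : ∀ᵐ z ∂(volume.restrict Q), F z * ω z < ⊤ :=
          ae_lt_top (hFmeas.mul hω) hBtop'
        have hpt : ∀ᵐ z ∂(volume.restrict Q), F z ≤ m⁻¹ * (F z * ω z) := by
          filter_upwards [hae1, hae2] with z h1 h2
          rcases eq_or_ne (ω z) ⊤ with hwt | hwt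
          · have : F z = 0 := by
              by_contra hFz
              rw [hwt, ENNReal.mul_top hFz] at h2
              exact absurd h2 (lt_irrefl _)
            simp [this]
          · have hmt : m ≠ ⊤ := ne_top_of_le_ne_top hwt h1
            calc F z = m⁻¹ * m * F z := by
                  rw [ENNReal.inv_mul_cancel hm0 hmt, one_mul]
              _ ≤ m⁻¹ * ω z * F z := by gcongr
              _ = m⁻¹ * (F z * ω z) := by ring
        have hint : ∫⁻ w in Q, F w ≤ m⁻¹ * B := by
          rw [hB]
          calc ∫⁻ w in Q, F w ≤ ∫⁻ w in Q, m⁻¹ * (F w * ω w) := lintegral_mono_ae hpt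
            _ = m⁻¹ * ∫⁻ w in Q, F w * ω w :=
                lintegral_const_mul' _ _ (ENNReal.inv_ne_top.2 hm0)
        calc (V⁻¹ * ∫⁻ w in Q, F w) ^ q * μ Q
            ≤ (V⁻¹ * (m⁻¹ * B)) ^ q * μ Q :=
              mul_le_mul_left (ENNReal.rpow_le_rpow (mul_le_mul_right hint _) hq0.le) _
          _ = (V⁻¹) ^ q * (m⁻¹) ^ q * μ Q * B ^ q := by
              rw [← mul_assoc V⁻¹, ENNReal.mul_rpow_of_nonneg _ _ hq0.le,
                ENNReal.mul_rpow_of_nonneg _ _ hq0.le]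
              ring
          _ ≤ C * B ^ q := by
              refine mul_le_mul_left ?_ _
              calc (V⁻¹) ^ q * (m⁻¹) ^ q * μ Q
                  = V ^ (-(q / 1)) * (m⁻¹) ^ q * μ Q := by
                    rw [div_one, ENNReal.rpow_neg, ENNReal.inv_rpow]
                _ ≤ C := hCab
          _ = C * B ^ (q / 1) := by rw [div_one]
    · -- p > 1
      have hCab := hC a b hab
      rw [lhs_normal hq0.le hp1 ω μ hab] at hCab
      set e : ℝ := 1 - p / (p - 1) with he
      have hp1' : (0:ℝ) < p - 1 := sub_pos.2 hp1
      have he_neg : e < 0 := by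
        rw [he]
        have : 1 < p / (p - 1) := (one_lt_div hp1').2 (by linarith)
        linarith
      set A := ∫⁻ z in Q, ω z ^ e with hA
      set s : ℝ := (p - 1) / p * q with hs
      have hs0 : 0 < s := by positivity
      by_cases hAtop : A = ⊤
      · -- integral of ω^(1-p') infinite forces μ Q = 0
        have hμ0 : μ Q = 0 := by
          by_contra hμ
          have hX : (V⁻¹) ^ q ≠ 0 := by
            simp [ENNReal.rpow_eq_zero_iff, hVt, hV0]
          have : (V⁻¹) ^ q * A ^ s * μ Q = ⊤ := by
            rw [hAtop, ENNReal.top_rpow_of_pos hs0, ENNReal.mul_top hX,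
              ENNReal.top_mul hμ]
          exact absurd (this ▸ hCab) (by simp [hCt.ne])
        rw [hμ0, mul_zero]
        exact zero_le
      · have hωe_meas : Measurable fun z => ω z ^ e :=
          ENNReal.continuous_rpow_const.measurable.comp hω
        have hae1 : ∀ᵐ z ∂(volume.restrict Q), ω z ^ e < ⊤ := ae_lt_top hωe_meas hAtop
        have hae2 : ∀ᵐ z ∂(volume.restrict Q), F z ^ p * ω z < ⊤ :=
          ae_lt_top ((hFmeas.pow_const _).mul hω) hBtop
        -- pointwise bound a.e.
        have hpt : ∀ᵐ z ∂(volume.restrict Q),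
            F z ≤ (F z ^ p * ω z) ^ (1 / p) * (ω z ^ e) ^ ((p - 1) / p) := by
          filter_upwards [hae1, hae2] with z h1 h2
          have hw0 : ω z ≠ 0 := by
            intro h0
            rw [h0, ENNReal.zero_rpow_of_neg he_neg] at h1
            exact absurd h1 (lt_irrefl _)
          rcases eq_or_ne (ω z) ⊤ with hwt | hwt
          · have : F z = 0 := by
              by_contra hFz
              have hFzp : F z ^ p ≠ 0 := by
                simp [ENNReal.rpow_eq_zero_iff, hFz, lt_asymm hp0]
              rw [hwt, ENNReal.mul_top hFzp] at h2
              exact absurd h2 (lt_irrefl _)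
            simp [this]
          · have key : (F z ^ p * ω z) ^ (1 / p) * (ω z ^ e) ^ ((p - 1) / p) = F z := by
              rw [ENNReal.mul_rpow_of_nonneg _ _ (by positivity : (0:ℝ) ≤ 1 / p),
                ← ENNReal.rpow_mul (F z), mul_one_div, div_self hp0.ne', ENNReal.rpow_one,
                ← ENNReal.rpow_mul (ω z), mul_assoc,
                ← ENNReal.rpow_add _ _ hw0 hwt]
              have h3 : 1 / p + e * ((p - 1) / p) = 0 := by
                rw [he]; field_simp; ring
              rw [h3, ENNReal.rpow_zero, mul_one]
            rw [key]
        -- Hölder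
        have hpq : p.HolderConjugate (p / (p - 1)) :=
          (Real.holderConjugate_iff_eq_conjExponent hp1).2 rfl
        have holder := ENNReal.lintegral_mul_le_Lp_mul_Lq (volume.restrict Q) hpq
          (f := fun z => (F z ^ p * ω z) ^ (1 / p))
          (g := fun z => (ω z ^ e) ^ ((p - 1) / p))
          (((hFmeas.pow_const p).mul hω).pow_const (1 / p)).aemeasurable
          ((hωe_meas.pow_const ((p - 1) / p))).aemeasurable
        have hg1 : ∀ z, ((F z ^ p * ω z) ^ (1 / p)) ^ p = F z ^ p * ω z := by
          intro z
          rw [← ENNReal.rpow_mul, one_div_mul_cancel hp0.ne', ENNReal.rpow_one]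
        have hg2 : ∀ z, ((ω z ^ e) ^ ((p - 1) / p)) ^ (p / (p - 1)) = ω z ^ e := by
          intro z
          rw [← ENNReal.rpow_mul]
          rw [show (p - 1) / p * (p / (p - 1)) = 1 by field_simp]
          exact ENNReal.rpow_one _
        have hint : ∫⁻ w in Q, F w ≤ B ^ (1 / p) * A ^ ((p - 1) / p) := by
          calc ∫⁻ w in Q, F w
              ≤ ∫⁻ w in Q, (F w ^ p * ω w) ^ (1 / p) * (ω w ^ e) ^ ((p - 1) / p) :=
                lintegral_mono_ae hpt
            _ ≤ (∫⁻ w in Q, ((F w ^ p * ω w) ^ (1 / p)) ^ p) ^ (1 / p) *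
                  (∫⁻ w in Q, ((ω w ^ e) ^ ((p - 1) / p)) ^ (p / (p - 1))) ^ (1 / (p / (p - 1))) :=
                holder
            _ = B ^ (1 / p) * A ^ ((p - 1) / p) := by
                simp only [hg1, hg2, ← hB, ← hA, one_div_div]
        calc (V⁻¹ * ∫⁻ w in Q, F w) ^ q * μ Q
            ≤ (V⁻¹ * (B ^ (1 / p) * A ^ ((p - 1) / p))) ^ q * μ Q :=
              mul_le_mul_left (ENNReal.rpow_le_rpow (mul_le_mul_right hint _) hq0.le) _
          _ = ((V⁻¹) ^ q * A ^ s * μ Q) * B ^ (q / p) := by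
              rw [ENNReal.mul_rpow_of_nonneg _ _ hq0.le,
                ENNReal.mul_rpow_of_nonneg _ _ hq0.le,
                ← ENNReal.rpow_mul B, ← ENNReal.rpow_mul A,
                show (1 : ℝ) / p * q = q / p by ring, show (p - 1) / p * q = s from rfl]
              ring
          _ ≤ C * B ^ (q / p) := mul_le_mul_left hCab _
  · -- (ii) → (i)
    rintro ⟨C, hC0, hCt, hC⟩
    refine ⟨C, hC0, hCt, ?_⟩
    intro a b hab
    set Q := Box a b with hQ
    set V := volume Q with hV
    have hV0 : V ≠ 0 := volume_box_pos hab
    have hVt : V ≠ ⊤ := volume_box_ne_top a b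
    rcases hp.eq_or_lt with hp1 | hp1
    · -- p = 1
      subst hp1
      set m := essInf ω (volume.restrict Q) with hm
      rw [dualFactor, if_pos rfl, ← hQ, ← hm]
      -- key bound
      have key : μ Q ≤ C * (m * V) ^ q := by
        rcases eq_or_ne m ⊤ with hmt | hmt
        · rw [hmt, ENNReal.top_mul hV0, ENNReal.top_rpow_of_pos hq0,
            ENNReal.mul_top hC0.ne']
          exact le_top
        · have step : ∀ t ∈ Ioi m, μ Q ≤ C * (t * V) ^ q := by
            intro t ht
            set S := Q ∩ {z | ω z < t} with hS
            have hSmeas : MeasurableSet S :=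
              (measurableSet_box a b).inter (hω measurableSet_Iio)
            have hs0 : volume S ≠ 0 := by
              intro h0
              have hmeas_lt : MeasurableSet {z : ℂ | ω z < t} :=
                measurableSet_lt hω measurable_const
              have h1 : volume.restrict Q {z | ω z < t} = 0 := by
                rw [Measure.restrict_apply hmeas_lt, inter_comm]
                exact h0
              have h2 : ∀ᵐ z ∂(volume.restrict Q), t ≤ ω z := by
                rw [ae_iff]
                simpa [not_le] using h1
              have := le_essInf_of_ae_le t h2
              exact absurd (lt_of_lt_of_le ht this) (lt_irrefl _)
            have hsub : S ⊆ Q := inter_subset_left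
            have hst : volume S ≠ ⊤ :=
              ne_top_of_le_ne_top hVt (measure_mono hsub)
            set f : ℂ → ℂ := S.indicator fun _ => (1 : ℂ) with hf
            have hfmeas : Measurable f := measurable_const.indicator hSmeas
            have hFind : (fun w => (‖f w‖₊ : ℝ≥0∞)) = S.indicator fun _ => 1 := by
              funext w
              by_cases hw : w ∈ S <;> simp [hf, indicator_of_mem, indicator_of_notMem, hw]
            have I1 : ∫⁻ w in Q, (‖f w‖₊ : ℝ≥0∞) = volume S := by
              rw [hFind, lintegral_indicator hSmeas, setLIntegral_one,
                Measure.restrict_apply hSmeas, inter_eq_self_of_subset_left hsub]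
            have I2 : ∫⁻ w in Q, (‖f w‖₊ : ℝ≥0∞) ^ (1:ℝ) * ω w ≤ t * volume S := by
              simp only [ENNReal.rpow_one]
              have : (fun w => (‖f w‖₊ : ℝ≥0∞) * ω w) = S.indicator fun w => ω w := by
                funext w
                rw [congrFun hFind w]
                by_cases hw : w ∈ S <;>
                  simp [indicator_of_mem, indicator_of_notMem, hw]
              rw [this, lintegral_indicator hSmeas]
              calc ∫⁻ w in S, ω w ∂(volume.restrict Q)
                  ≤ ∫⁻ _ in S, t ∂(volume.restrict Q) := by
                    refine setLIntegral_mono' hSmeas fun z hz => ?_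
                    exact le_of_lt hz.2
                _ = t * (volume.restrict Q) S := setLIntegral_const _ _
                _ = t * volume S := by
                    rw [Measure.restrict_apply hSmeas, inter_eq_self_of_subset_left hsub]
            have happ := hC f hfmeas a b hab
            rw [← hQ, ← hV, I1, div_one] at happ
            have happ2 : (V⁻¹ * volume S) ^ q * μ Q ≤ C * (t * volume S) ^ q :=
              happ.trans (mul_le_mul_right (ENNReal.rpow_le_rpow I2 hq0.le) C)
            -- cancel (V⁻¹ * volume S)^q
            have hX0 : V⁻¹ * volume S ≠ 0 :=
              mul_ne_zero (ENNReal.inv_ne_zero.2 hVt) hs0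
            have hXt : V⁻¹ * volume S ≠ ⊤ :=
              ENNReal.mul_ne_top (ENNReal.inv_ne_top.2 hV0) hst
            have hXq0 : (V⁻¹ * volume S) ^ q ≠ 0 := by
              simp [ENNReal.rpow_eq_zero_iff, hX0, hXt]
            have hXqt : (V⁻¹ * volume S) ^ q ≠ ⊤ := by
              simp [ENNReal.rpow_eq_top_iff, hX0, hXt]
            have hmulkey : t * V * (V⁻¹ * volume S) = t * volume S := by
              calc t * V * (V⁻¹ * volume S) = t * (V * V⁻¹) * volume S := by ring
                _ = t * volume S := by rw [ENNReal.mul_inv_cancel hV0 hVt, mul_one]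
            have heq : C * (t * volume S) ^ q = (C * (t * V) ^ q) * (V⁻¹ * volume S) ^ q := by
              rw [mul_assoc, ← ENNReal.mul_rpow_of_nonneg _ _ hq0.le, hmulkey]
            rw [heq, mul_comm ((V⁻¹ * volume S) ^ q) (μ Q)] at happ2
            exact (ENNReal.mul_le_mul_iff_left hXq0 hXqt).1 happ2
          haveI : (𝓝[>] m).NeBot :=
            nhdsGT_neBot_of_exists_gt ⟨⊤, lt_top_iff_ne_top.2 hmt⟩
          have h1 : Filter.Tendsto (fun t : ℝ≥0∞ => t * V) (𝓝[>] m) (𝓝 (m * V)) :=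
            ENNReal.Tendsto.mul_const (Filter.tendsto_id.mono_right nhdsWithin_le_nhds)
              (Or.inr hVt)
          have h2 : Filter.Tendsto (fun t : ℝ≥0∞ => C * (t * V) ^ q) (𝓝[>] m)
              (𝓝 (C * (m * V) ^ q)) :=
            ENNReal.Tendsto.const_mul ((ENNReal.continuous_rpow_const.tendsto _).comp h1)
              (Or.inr hCt.ne)
          exact ge_of_tendsto h2 (eventually_nhdsWithin_of_forall step)
      -- conclude from key
      rw [div_one]
      calc V ^ (-q) * (m⁻¹) ^ q * μ Q
          ≤ V ^ (-q) * (m⁻¹) ^ q * (C * (m * V) ^ q) := mul_le_mul_right key _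
        _ ≤ C := by
            rw [ENNReal.mul_rpow_of_nonneg m V hq0.le, ENNReal.rpow_neg, ENNReal.inv_rpow]
            calc (V ^ q)⁻¹ * (m ^ q)⁻¹ * (C * (m ^ q * V ^ q))
                = C * ((m ^ q)⁻¹ * m ^ q) * ((V ^ q)⁻¹ * V ^ q) := by ring
              _ ≤ C * 1 * 1 := by
                  gcongr <;> exact ennreal_inv_mul_le_one _
              _ = C := by rw [mul_one, mul_one]
    · -- p > 1
      rw [lhs_normal hq0.le hp1 ω μ hab, ← hQ, ← hV]
      set e : ℝ := 1 - p / (p - 1) with he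
      have hp1' : (0:ℝ) < p - 1 := sub_pos.2 hp1
      have he_neg : e < 0 := by
        rw [he]
        have : 1 < p / (p - 1) := (one_lt_div hp1').2 (by linarith)
        linarith
      have he_mul : e * (p - 1) = -1 := by
        rw [he]; field_simp; ring
      set s : ℝ := (p - 1) / p * q with hs
      have hs0 : 0 < s := by positivity
      set A := ∫⁻ z in Q, ω z ^ e with hA
      set g : ℕ → ℂ → ℝ≥0∞ := fun n z => min (ω z ^ e) n with hg
      have hg_meas : ∀ n, Measurable (g n) := fun n =>
        (ENNReal.continuous_rpow_const.measurable.comp hω).min measurable_const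
      have hg_mono : Monotone g := by
        intro n m hnm z
        exact min_le_min le_rfl (by exact_mod_cast Nat.cast_le.2 hnm)
      have hg_top : ∀ n z, g n z ≠ ⊤ := fun n z =>
        ne_top_of_le_ne_top (ENNReal.natCast_ne_top n) (min_le_right _ _)
      -- key pointwise inequality
      have hkey : ∀ n z, g n z ^ p * ω z ≤ g n z := by
        intro n z
        set x := ω z with hx
        rcases eq_or_ne x 0 with h0 | h0
        · rw [h0, mul_zero]; exact zero_le
        rcases eq_or_ne x ⊤ with ht | ht
        · have : g n z = 0 := by
            rw [hg]; simp [← hx, ht, ENNReal.top_rpow_of_neg he_neg]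
          rw [this, ENNReal.zero_rpow_of_pos hp0, zero_mul]
        · rcases le_total (x ^ e) (n : ℝ≥0∞) with hle | hle
          · have hgn : g n z = x ^ e := by rw [hg]; exact min_eq_left hle
            have hpm1 : p - 1 ≠ 0 := hp1'.ne'
            have hexp : e * p + 1 = e := by
              rw [he]; field_simp; ring
            refine le_of_eq ?_
            rw [hgn]
            calc (x ^ e) ^ p * x = x ^ (e * p) * x ^ (1:ℝ) := by
                  rw [← ENNReal.rpow_mul, ENNReal.rpow_one]
              _ = x ^ (e * p + 1) := (ENNReal.rpow_add _ _ h0 ht).symm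
              _ = x ^ e := by rw [hexp]
          · have hgn : g n z = (n : ℝ≥0∞) := by rw [hg]; exact min_eq_right hle
            rcases eq_or_ne (n : ℝ≥0∞) 0 with hn0 | hn0
            · rw [hgn, hn0, ENNReal.zero_rpow_of_pos hp0, zero_mul]
            · rw [hgn]
              have h1 : (n : ℝ≥0∞) ^ (p - 1) ≤ x⁻¹ := by
                have h2 := ENNReal.rpow_le_rpow hle hp1'.le
                rwa [← ENNReal.rpow_mul, he_mul, ENNReal.rpow_neg, ENNReal.rpow_one] at h2
              calc (n : ℝ≥0∞) ^ p * x = (n : ℝ≥0∞) ^ (p - 1) * (n : ℝ≥0∞) * x := by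
                    rw [show p = p - 1 + 1 by ring,
                      ENNReal.rpow_add _ _ hn0 (ENNReal.natCast_ne_top n), ENNReal.rpow_one,
                      show p - 1 + 1 - 1 = p - 1 by ring]
                _ ≤ x⁻¹ * (n : ℝ≥0∞) * x := by gcongr
                _ = (n : ℝ≥0∞) * (x⁻¹ * x) := by ring
                _ ≤ (n : ℝ≥0∞) * 1 := by gcongr; exact ennreal_inv_mul_le_one _
                _ = (n : ℝ≥0∞) := mul_one _
      set An : ℕ → ℝ≥0∞ := fun n => ∫⁻ z in Q, g n z with hAn
      have hAn_top : ∀ n, An n ≠ ⊤ := by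
        intro n
        have : An n ≤ (n : ℝ≥0∞) * V := by
          rw [hAn]
          calc ∫⁻ z in Q, g n z ≤ ∫⁻ _ in Q, (n : ℝ≥0∞) :=
              lintegral_mono fun z => min_le_right _ _
            _ = (n : ℝ≥0∞) * V := by rw [setLIntegral_const]
        exact ne_top_of_le_ne_top
          (ENNReal.mul_ne_top (ENNReal.natCast_ne_top n) hVt) this
      -- testing inequality applied to fₙ
      have hCn : ∀ n, (V⁻¹ * An n) ^ q * μ Q ≤ C * (An n) ^ (q / p) := by
        intro n
        set fn : ℂ → ℂ := fun z => ((g n z).toReal : ℂ) with hfn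
        have hfn_meas : Measurable fn :=
          Complex.measurable_ofReal.comp (ENNReal.measurable_toReal.comp (hg_meas n))
        have hFg : ∀ z, (‖fn z‖₊ : ℝ≥0∞) = g n z := by
          intro z
          rw [hfn]
          simp only [Complex.nnnorm_real]
          rw [← enorm_eq_nnnorm, Real.enorm_eq_ofReal ENNReal.toReal_nonneg,
            ENNReal.ofReal_toReal (hg_top n z)]
        have happ := hC fn hfn_meas a b hab
        simp only [hFg] at happ
        rw [← hQ, ← hV] at happ
        refine happ.trans (mul_le_mul_right (ENNReal.rpow_le_rpow ?_
          (div_nonneg hq0.le hp0.le)) C)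
        calc ∫⁻ w in Q, g n w ^ p * ω w ≤ ∫⁻ w in Q, g n w :=
            lintegral_mono fun w => hkey n w
          _ = An n := rfl
      -- per-n normalized bound
      have hstep : ∀ n, (V⁻¹) ^ q * (An n) ^ s * μ Q ≤ C := by
        intro n
        rcases eq_or_ne (An n) 0 with h0 | h0
        · rw [h0, ENNReal.zero_rpow_of_pos hs0, mul_zero, zero_mul]
          exact zero_le
        · have hAq0 : (An n) ^ (q / p) ≠ 0 := by
            simp [ENNReal.rpow_eq_zero_iff, h0, hAn_top n]
          have hAqt : (An n) ^ (q / p) ≠ ⊤ := by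
            simp [ENNReal.rpow_eq_top_iff, h0, hAn_top n]
          have hsplit : (V⁻¹ * An n) ^ q = (V⁻¹) ^ q * (An n) ^ s * (An n) ^ (q / p) := by
            rw [ENNReal.mul_rpow_of_nonneg _ _ hq0.le, mul_assoc,
              ← ENNReal.rpow_add _ _ h0 (hAn_top n)]
            congr 2
            rw [hs]; field_simp; ring
          have h2 : ((V⁻¹) ^ q * (An n) ^ s * μ Q) * (An n) ^ (q / p)
              ≤ C * (An n) ^ (q / p) := by
            calc ((V⁻¹) ^ q * (An n) ^ s * μ Q) * (An n) ^ (q / p)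
                = (V⁻¹ * An n) ^ q * μ Q := by rw [hsplit]; ring
              _ ≤ C * (An n) ^ (q / p) := hCn n
          exact (ENNReal.mul_le_mul_iff_left hAq0 hAqt).1 h2
      -- pass to supremum
      have hsup : A = ⨆ n, An n := by
        calc A = ∫⁻ z in Q, ⨆ n : ℕ, g n z := by
              rw [hA]
              exact lintegral_congr fun z => (ennreal_iSup_min_nat (ω z ^ e)).symm
          _ = ⨆ n, An n := lintegral_iSup hg_meas hg_mono
      calc (V⁻¹) ^ q * A ^ s * μ Q
          = ⨆ n, (V⁻¹) ^ q * (An n) ^ s * μ Q := by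
            rw [hsup, ennreal_rpow_iSup _ hs0, ENNReal.mul_iSup, ENNReal.iSup_mul]
        _ ≤ C := iSup_le hstep
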